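/- Let n > k ≥ 1 and let λ_1 ≥ λ_2 ≥ ⋯ ≥ λ_n = 0 be integers with λ_k ≥ 2. Then ∏ (λ_i − λ_j + j − i)/(j − i), the product taken over all pairs (i,j) with 1 ≤ i ≤ k < j ≤ n, is at least n(n+1)/((n−k)(n−k+1)). -/
import Mathlib

lemma weyl_telescope (n : ℕ) (hn : 0 < n) :
    ∀ k, k < n → ∏ i ∈ Finset.Icc 1 k, (((n:ℚ) - i + 2)/((n:ℚ) - i)) =
      ((n:ℚ) * ((n:ℚ)+1)) / (((n:ℚ) - k) * ((n:ℚ) - k + 1)) := by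
  intro k
  induction k with
  | zero =>
    intro _
    have h1 : (0:ℚ) < (n:ℚ) := by exact_mod_cast hn
    simp
    field_simp
  | succ m ih =>
    intro hm
    have hmn : m < n := by omega
    have hcast : (m:ℚ) + 1 < (n:ℚ) := by exact_mod_cast hm
    rw [Finset.prod_Icc_succ_top (by omega : 1 ≤ m + 1), ih hmn]
    have h1 : (n:ℚ) - m ≠ 0 := by nlinarith
    have h2 : (n:ℚ) - m + 1 ≠ 0 := by nlinarith
    have h3 : (n:ℚ) - (m+1) ≠ 0 := by nlinarith
    have h4 : (n:ℚ) - (m+1) + 1 ≠ 0 := by nlinarith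
    push_cast at *
    field_simp
    ring

/-- Weyl dimension-type estimate: if `λ_1 ≥ λ_2 ≥ ⋯ ≥ λ_n = 0` with `λ_k ≥ 2`
(`1 ≤ k < n`), then
`∏_{1 ≤ i ≤ k < j ≤ n} (λ_i - λ_j + j - i)/(j - i) ≥ n(n+1)/((n-k)(n-k+1))`. -/
theorem weyl_product_bound_lambda_k_ge_two (n k : ℕ) (lam : ℕ → ℕ)
    (hk : 1 ≤ k) (hkn : k < n)
    (hmono : ∀ i, 1 ≤ i → i < n → lam (i + 1) ≤ lam i)
    (hlast : lam n = 0) (h2 : 2 ≤ lam k) :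
    ((n : ℚ) * ((n : ℚ) + 1)) / (((n : ℚ) - (k : ℚ)) * ((n : ℚ) - (k : ℚ) + 1)) ≤
      ∏ p ∈ Finset.Icc 1 k ×ˢ Finset.Icc (k + 1) n,
        (((lam p.1 : ℚ) - (lam p.2 : ℚ) + (p.2 : ℚ) - (p.1 : ℚ)) /
          ((p.2 : ℚ) - (p.1 : ℚ))) := by
  set f : ℕ × ℕ → ℚ := fun p =>
    (((lam p.1 : ℚ) - (lam p.2 : ℚ) + (p.2 : ℚ) - (p.1 : ℚ)) / ((p.2 : ℚ) - (p.1 : ℚ)))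
    with hf
  set S : Finset (ℕ × ℕ) := Finset.Icc 1 k ×ˢ Finset.Icc (k + 1) n with hS
  -- antitonicity
  have hmono' : ∀ a b : ℕ, 1 ≤ a → a ≤ b → b ≤ n → lam b ≤ lam a := by
    intro a b ha hab hbn
    induction b with
    | zero => omega
    | succ m ih =>
      rcases Nat.eq_or_lt_of_le hab with h | h
      · rw [h]
      · have ham : a ≤ m := by omega
        exact le_trans (hmono m (by omega) (by omega)) (ih ham (by omega))
  -- every factor on S is ≥ 1
  have hone : ∀ p ∈ S, 1 ≤ f p := by
    intro p hp
    rw [hS, Finset.mem_product, Finset.mem_Icc, Finset.mem_Icc] at hp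
    obtain ⟨⟨h1i, hik⟩, ⟨hkj, hjn⟩⟩ := hp
    have hij : p.1 < p.2 := by omega
    have hd : (0:ℚ) < (p.2:ℚ) - (p.1:ℚ) := by
      have : (p.1:ℚ) < (p.2:ℚ) := by exact_mod_cast hij
      linarith
    have hlm : lam p.2 ≤ lam p.1 := hmono' p.1 p.2 h1i (le_of_lt hij) hjn
    have hlmQ : (lam p.2 : ℚ) ≤ (lam p.1 : ℚ) := by exact_mod_cast hlm
    rw [hf, one_le_div hd]
    linarith
  -- the subset with j = n
  set T : Finset (ℕ × ℕ) := Finset.Icc 1 k ×ˢ {n} with hT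
  have hTS : T ⊆ S := by
    intro p hp
    rw [hT, Finset.mem_product, Finset.mem_singleton, Finset.mem_Icc] at hp
    rw [hS, Finset.mem_product, Finset.mem_Icc, Finset.mem_Icc]
    exact ⟨hp.1, by omega, by omega⟩
  -- product over T in closed form is at least the target
  have hTprod : ((n : ℚ) * ((n : ℚ) + 1)) / (((n : ℚ) - (k : ℚ)) * ((n : ℚ) - (k : ℚ) + 1))
      ≤ ∏ p ∈ T, f p := by
    rw [hT, Finset.prod_product]
    simp only [Finset.prod_singleton]
    rw [← weyl_telescope n (by omega) k hkn]
    apply Finset.prod_le_prod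
    · intro i hi
      rw [Finset.mem_Icc] at hi
      have : (i:ℚ) < (n:ℚ) := by exact_mod_cast (by omega : i < n)
      have hd : (0:ℚ) < (n:ℚ) - (i:ℚ) := by linarith
      positivity
    · intro i hi
      rw [Finset.mem_Icc] at hi
      have hin : i < n := by omega
      have hiQ : (i:ℚ) < (n:ℚ) := by exact_mod_cast hin
      have hd : (0:ℚ) < (n:ℚ) - (i:ℚ) := by linarith
      have hli : 2 ≤ lam i := le_trans h2 (hmono' i k hi.1 hi.2 (le_of_lt hkn))
      have hliQ : (2:ℚ) ≤ (lam i : ℚ) := by exact_mod_cast hli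
      rw [hf]
      simp only [hlast, Nat.cast_zero]
      gcongr
      linarith
  -- product over T is at most product over S
  have hST : ∏ p ∈ T, f p ≤ ∏ p ∈ S, f p := by
    rw [← Finset.prod_sdiff hTS]
    have h1 : (1:ℚ) ≤ ∏ p ∈ S \ T, f p := by
      have := Finset.prod_le_prod (s := S \ T) (f := fun _ => (1:ℚ)) (g := f)
        (fun _ _ => zero_le_one) (fun p hp => hone p (Finset.mem_sdiff.mp hp).1)
      simpa using this
    have hT0 : (0:ℚ) ≤ ∏ p ∈ T, f p := by
      apply Finset.prod_nonneg
      intro p hp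
      exact le_trans zero_le_one (hone p (hTS hp))
    calc ∏ p ∈ T, f p = 1 * ∏ p ∈ T, f p := by ring
      _ ≤ (∏ p ∈ S \ T, f p) * ∏ p ∈ T, f p := by
          exact mul_le_mul_of_nonneg_right h1 hT0
  exact hTprod.trans hST
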